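/- Let ℰ = (E₁, E₂, E₍?₎) be an optimal USD measurement for a pair of positive semi-definite operators (γ₁, γ₂). Then supp E₍?₎ ∩ ker γ₁ = supp E₍?₎ ∩ ker γ₂. (Optimality at a vector: if φ ∈ supp E₍?₎ ∩ ker γ₁, replacing (E₂, E₍?₎) by (E₂ + α|φ⟩⟨φ|, E₍?₎ − α|φ⟩⟨φ|) for small α > 0 remains a valid USD measurement, so by optimality ⟨φ|γ₂|φ⟩ = 0.) -/

import Mathlib

open Matrix ComplexOrder

lemma vmv_mulVec {n : ℕ} (φ w x : Fin n → ℂ) :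
    Matrix.vecMulVec φ w *ᵥ x = (w ⬝ᵥ x) • φ := by
  ext i
  simp [Matrix.mulVec, Matrix.vecMulVec_apply, dotProduct, Finset.mul_sum, mul_assoc,
    mul_comm, mul_left_comm]

lemma trace_vmv_mul {n : ℕ} (φ w : Fin n → ℂ) (γ : Matrix (Fin n) (Fin n) ℂ) :
    Matrix.trace (Matrix.vecMulVec φ w * γ) = w ⬝ᵥ (γ *ᵥ φ) := by
  simp only [Matrix.trace, Matrix.diag, Matrix.mul_apply, Matrix.vecMulVec_apply, dotProduct,
    Matrix.mulVec, Finset.mul_sum]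
  rw [Finset.sum_comm]
  exact Finset.sum_congr rfl fun j _ => Finset.sum_congr rfl fun i _ => by ring

lemma star_dp {n : ℕ} (φ x : Fin n → ℂ) :
    star x ⬝ᵥ φ = star (star φ ⬝ᵥ x) := by
  simp [dotProduct, star_sum, mul_comm]

lemma usd_key {n : ℕ} (γ₁ γ₂ E₁ E₂ Eq : Matrix (Fin n) (Fin n) ℂ)
    (hγ₂ : γ₂.PosSemidef)
    (hE₁ : E₁.PosSemidef) (hE₂ : E₂.PosSemidef) (hEq : Eq.PosSemidef)
    (hsum : E₁ + E₂ + Eq = 1)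
    (husd₂ : Matrix.trace (E₁ * γ₂) = 0)
    (hopt : ∀ F₁ F₂ Fq : Matrix (Fin n) (Fin n) ℂ,
      F₁.PosSemidef → F₂.PosSemidef → Fq.PosSemidef → F₁ + F₂ + Fq = 1 →
      Matrix.trace (F₂ * γ₁) = 0 → Matrix.trace (F₁ * γ₂) = 0 →
      (Matrix.trace (F₁ * γ₁) + Matrix.trace (F₂ * γ₂)).re
        ≤ (Matrix.trace (E₁ * γ₁) + Matrix.trace (E₂ * γ₂)).re)
    (husd₁ : Matrix.trace (E₂ * γ₁) = 0)
    (φ ψ : Fin n → ℂ) (hψ : Eq *ᵥ ψ = φ) (hφ : γ₁ *ᵥ φ = 0) : γ₂ *ᵥ φ = 0 := by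
  have hc0 : 0 ≤ star ψ ⬝ᵥ (Eq *ᵥ ψ) := hEq.dotProduct_mulVec_nonneg ψ
  by_cases hc : star ψ ⬝ᵥ (Eq *ᵥ ψ) = 0
  · have h0 : Eq *ᵥ ψ = 0 := (hEq.dotProduct_mulVec_zero_iff ψ).mp hc
    rw [← hψ, h0, Matrix.mulVec_zero]
  set r : ℝ := (star ψ ⬝ᵥ (Eq *ᵥ ψ)).re with hr_def
  obtain ⟨hre, him⟩ := Complex.nonneg_iff.mp hc0
  have hcr : star ψ ⬝ᵥ (Eq *ᵥ ψ) = (r : ℂ) := by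
    apply Complex.ext <;> simp [hr_def, ← him]
  have hr : 0 < r := lt_of_le_of_ne hre (fun h => hc (by rw [hcr, ← h]; simp))
  have hrC : ((r : ℂ)) ≠ 0 := by simpa using hr.ne'
  have hstar_inv : star (((r : ℂ))⁻¹) = ((r : ℂ))⁻¹ := by
    rw [← Complex.ofReal_inv]
    exact Complex.conj_ofReal _
  set P : Matrix (Fin n) (Fin n) ℂ := Matrix.vecMulVec φ (star φ) with hP_def
  have hPherm : P.IsHermitian := by
    ext i j
    simp [hP_def, Matrix.conjTranspose_apply, Matrix.vecMulVec_apply, mul_comm]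
  have hPsmul_herm : (((r : ℂ))⁻¹ • P).IsHermitian := by
    show (((r : ℂ))⁻¹ • P)ᴴ = _
    rw [Matrix.conjTranspose_smul, hstar_inv, hPherm.eq]
  have hPx : ∀ x : Fin n → ℂ, star x ⬝ᵥ (P *ᵥ x)
      = (star φ ⬝ᵥ x) * star (star φ ⬝ᵥ x) := by
    intro x
    rw [hP_def, vmv_mulVec, dotProduct_smul, star_dp]
    simp [mul_comm]
  have f2 : ∀ x : Fin n → ℂ, star ψ ⬝ᵥ (Eq *ᵥ x) = star φ ⬝ᵥ x := by
    intro x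
    rw [← hψ, star_mulVec, hEq.1.eq, ← dotProduct_mulVec]
  have f3 : star ψ ⬝ᵥ φ = (r : ℂ) := by rw [← hψ, hcr]
  have hFq : (Eq - ((r : ℂ))⁻¹ • P).PosSemidef := by
    rw [posSemidef_iff_dotProduct_mulVec]
    constructor
    · exact hEq.1.sub hPsmul_herm
    · intro x
      set t : ℂ := star φ ⬝ᵥ x with ht
      have hxφ : star x ⬝ᵥ φ = star t := by rw [star_dp, ht]
      have hsa : star (t / (r : ℂ)) = star t / (r : ℂ) := by
        rw [star_div₀]
        congr 1
        exact Complex.conj_ofReal r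
      have lhs_eq : star x ⬝ᵥ ((Eq - ((r : ℂ))⁻¹ • P) *ᵥ x)
          = star x ⬝ᵥ (Eq *ᵥ x) - ((r : ℂ))⁻¹ * (t * star t) := by
        rw [Matrix.sub_mulVec, dotProduct_sub, Matrix.smul_mulVec, dotProduct_smul, hPx x]
        simp [smul_eq_mul, ht]
      have rhs_eq : star (x - (t / (r : ℂ)) • ψ) ⬝ᵥ (Eq *ᵥ (x - (t / (r : ℂ)) • ψ))
          = star x ⬝ᵥ (Eq *ᵥ x) - (t / r) * star t - (star t / r) * t
            + (star t / r) * (t / r) * r := by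
        rw [star_sub, star_smul, Matrix.mulVec_sub, Matrix.mulVec_smul, hψ]
        rw [sub_dotProduct, dotProduct_sub, dotProduct_sub, smul_dotProduct, smul_dotProduct,
          dotProduct_smul, dotProduct_smul, f2 x, hxφ, f3, hsa, ← ht]
        simp only [smul_eq_mul]
        ring
      have keyeq : star x ⬝ᵥ ((Eq - ((r : ℂ))⁻¹ • P) *ᵥ x)
          = star (x - (t / (r : ℂ)) • ψ) ⬝ᵥ (Eq *ᵥ (x - (t / (r : ℂ)) • ψ)) := by
        rw [lhs_eq, rhs_eq]
        field_simp
        ring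
      rw [keyeq]
      exact hEq.dotProduct_mulVec_nonneg _
  have hF₂ : (E₂ + ((r : ℂ))⁻¹ • P).PosSemidef := by
    rw [posSemidef_iff_dotProduct_mulVec]
    constructor
    · exact hE₂.1.add hPsmul_herm
    · intro x
      rw [Matrix.add_mulVec, dotProduct_add, Matrix.smul_mulVec, dotProduct_smul, hPx x]
      refine add_nonneg (hE₂.dotProduct_mulVec_nonneg x) ?_
      rw [smul_eq_mul]
      refine mul_nonneg ?_ (mul_star_self_nonneg _)
      rw [← Complex.ofReal_inv]
      exact Complex.zero_le_real.mpr (by positivity)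
  have hsum' : E₁ + (E₂ + ((r : ℂ))⁻¹ • P) + (Eq - ((r : ℂ))⁻¹ • P) = 1 := by
    rw [← hsum]; abel
  have trP1 : Matrix.trace (P * γ₁) = 0 := by
    rw [hP_def, trace_vmv_mul, hφ, dotProduct_zero]
  have htr1 : Matrix.trace ((E₂ + ((r : ℂ))⁻¹ • P) * γ₁) = 0 := by
    rw [Matrix.add_mul, Matrix.trace_add, Matrix.smul_mul, Matrix.trace_smul, husd₁, trP1]
    simp
  set s : ℂ := star φ ⬝ᵥ (γ₂ *ᵥ φ) with hs_def
  have hs0 : 0 ≤ s := hγ₂.dotProduct_mulVec_nonneg φ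
  have trP2 : Matrix.trace (P * γ₂) = s := by rw [hP_def, trace_vmv_mul, hs_def]
  have htr2 : Matrix.trace ((E₂ + ((r : ℂ))⁻¹ • P) * γ₂)
      = Matrix.trace (E₂ * γ₂) + ((r : ℂ))⁻¹ * s := by
    rw [Matrix.add_mul, Matrix.trace_add, Matrix.smul_mul, Matrix.trace_smul, trP2, smul_eq_mul]
  have hineq := hopt E₁ (E₂ + ((r : ℂ))⁻¹ • P) (Eq - ((r : ℂ))⁻¹ • P)
    hE₁ hF₂ hFq hsum' htr1 husd₂
  rw [htr2] at hineq
  obtain ⟨hsre, hsim⟩ := Complex.nonneg_iff.mp hs0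
  have hre_le : (((r : ℂ))⁻¹ * s).re ≤ 0 := by
    simp only [Complex.add_re] at hineq
    linarith
  have hrs : (((r : ℂ))⁻¹ * s).re = r⁻¹ * s.re := by
    rw [← Complex.ofReal_inv, Complex.re_ofReal_mul]
  have hszero : s = 0 := by
    apply Complex.ext
    · simp only [Complex.zero_re]
      nlinarith [inv_pos.mpr hr, hrs ▸ hre_le]
    · simp [← hsim]
  exact (hγ₂.dotProduct_mulVec_zero_iff φ).mp hszero

/-- For an optimal USD measurement `(E₁, E₂, E?)` of `(γ₁, γ₂)`:
`supp E? ∩ ker γ₁ = supp E? ∩ ker γ₂`. -/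
theorem stmt_10 {n : ℕ} (γ₁ γ₂ E₁ E₂ Eq : Matrix (Fin n) (Fin n) ℂ)
    (hγ₁ : γ₁.PosSemidef) (hγ₂ : γ₂.PosSemidef)
    (hE₁ : E₁.PosSemidef) (hE₂ : E₂.PosSemidef) (hEq : Eq.PosSemidef)
    (hsum : E₁ + E₂ + Eq = 1)
    (husd₁ : Matrix.trace (E₂ * γ₁) = 0) (husd₂ : Matrix.trace (E₁ * γ₂) = 0)
    (hopt : ∀ F₁ F₂ Fq : Matrix (Fin n) (Fin n) ℂ,
      F₁.PosSemidef → F₂.PosSemidef → Fq.PosSemidef → F₁ + F₂ + Fq = 1 →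
      Matrix.trace (F₂ * γ₁) = 0 → Matrix.trace (F₁ * γ₂) = 0 →
      (Matrix.trace (F₁ * γ₁) + Matrix.trace (F₂ * γ₂)).re
        ≤ (Matrix.trace (E₁ * γ₁) + Matrix.trace (E₂ * γ₂)).re) :
    LinearMap.range (Matrix.toEuclideanLin Eq) ⊓ LinearMap.ker (Matrix.toEuclideanLin γ₁)
      = LinearMap.range (Matrix.toEuclideanLin Eq) ⊓ LinearMap.ker (Matrix.toEuclideanLin γ₂) := by
  have hopt' : ∀ F₁ F₂ Fq : Matrix (Fin n) (Fin n) ℂ,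
      F₁.PosSemidef → F₂.PosSemidef → Fq.PosSemidef → F₁ + F₂ + Fq = 1 →
      Matrix.trace (F₂ * γ₂) = 0 → Matrix.trace (F₁ * γ₁) = 0 →
      (Matrix.trace (F₁ * γ₂) + Matrix.trace (F₂ * γ₁)).re
        ≤ (Matrix.trace (E₂ * γ₂) + Matrix.trace (E₁ * γ₁)).re := by
    intro F₁ F₂ Fq h1 h2 hq hs t2 t1
    have h := hopt F₂ F₁ Fq h2 h1 hq (by rw [← hs]; abel) t1 t2
    rw [add_comm ((F₁ * γ₂).trace), add_comm ((E₂ * γ₂).trace)]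
    exact h
  have hsum' : E₂ + E₁ + Eq = 1 := by rw [← hsum]; abel
  ext x
  simp only [Submodule.mem_inf, LinearMap.mem_range, LinearMap.mem_ker]
  constructor
  · rintro ⟨⟨ψ, hψ⟩, h1⟩
    refine ⟨⟨ψ, hψ⟩, ?_⟩
    exact usd_key γ₁ γ₂ E₁ E₂ Eq hγ₂ hE₁ hE₂ hEq hsum husd₂ hopt husd₁ x ψ (by rw [← hψ]; rfl) (by simpa using congrArg WithLp.ofLp h1) |> congrArg (WithLp.toLp 2) |>.trans (by rfl)
  · rintro ⟨⟨ψ, hψ⟩, h2⟩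
    refine ⟨⟨ψ, hψ⟩, ?_⟩
    exact usd_key γ₂ γ₁ E₂ E₁ Eq hγ₁ hE₂ hE₁ hEq hsum' husd₁ hopt' husd₂ x ψ (by rw [← hψ]; rfl) (by simpa using congrArg WithLp.ofLp h2) |> congrArg (WithLp.toLp 2) |>.trans (by rfl)
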